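/- For every directed graph H, γ(H) = |E(H)|/2 if and only if every pair of distinct vertices of H either induces a directed 2-cycle (arcs in both directions) or induces no arcs at all. -/

import Mathlib

open Finset

/-- A subgraph whose arcs all increase w.r.t. some `ℕ`-valued function is acyclic. -/
lemma acyc_of_mono {V : Type} (ord : V → ℕ) (B : Finset (V × V))
    (hB : ∀ p ∈ B, ord p.1 < ord p.2) :
    ¬ ∃ k, 2 ≤ k ∧ ∃ v : ZMod k → V, Function.Injective v ∧
      ∀ i : ZMod k, (v i, v (i + 1)) ∈ B := by
  rintro ⟨k, hk, v, -, hcyc⟩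
  haveI : NeZero k := ⟨by omega⟩
  obtain ⟨i, -, hmax⟩ := Finset.exists_max_image (Finset.univ : Finset (ZMod k))
    (fun i => ord (v i)) ⟨0, Finset.mem_univ 0⟩
  have h1 := hB _ (hcyc i)
  have h2 := hmax (i + 1) (Finset.mem_univ _)
  simp only at h1 h2
  omega

/-- Decreasing version. -/
lemma acyc_of_anti {V : Type} (ord : V → ℕ) (B : Finset (V × V))
    (hB : ∀ p ∈ B, ord p.2 < ord p.1) :
    ¬ ∃ k, 2 ≤ k ∧ ∃ v : ZMod k → V, Function.Injective v ∧
      ∀ i : ZMod k, (v i, v (i + 1)) ∈ B := by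
  rintro ⟨k, hk, v, -, hcyc⟩
  haveI : NeZero k := ⟨by omega⟩
  obtain ⟨i, -, hmin⟩ := Finset.exists_min_image (Finset.univ : Finset (ZMod k))
    (fun i => ord (v i)) ⟨0, Finset.mem_univ 0⟩
  have h1 := hB _ (hcyc i)
  have h2 := hmin (i + 1) (Finset.mem_univ _)
  simp only at h1 h2
  omega

/-- An acyclic subgraph contains no 2-cycle. -/
lemma no_two_cycle {V : Type} (B : Finset (V × V))
    (hac : ¬ ∃ k, 2 ≤ k ∧ ∃ v : ZMod k → V, Function.Injective v ∧
      ∀ i : ZMod k, (v i, v (i + 1)) ∈ B)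
    {a b : V} (hab : a ≠ b) (h1 : (a, b) ∈ B) (h2 : (b, a) ∈ B) : False := by
  have hz : ∀ x : ZMod 2, x = 0 ∨ x = 1 := by decide
  classical
  apply hac
  refine ⟨2, le_refl 2, fun i : ZMod 2 => if i = 0 then a else b, ?_, ?_⟩
  · intro i j h
    rcases hz i with rfl | rfl <;> rcases hz j with rfl | rfl <;> simp_all
  · intro i
    rcases hz i with rfl | rfl
    · simpa using h1
    · have h20 : ((1 + 1 : ZMod 2) = 0) := by decide
      simpa [h20] using h2

/-- If `2g = |A|`, the increasing arcs w.r.t. any injective ordering number exactly `g`. -/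
lemma card_inc {V : Type} [Fintype V] [DecidableEq V] (A : Finset (V × V))
    (hloop : ∀ v : V, (v, v) ∉ A) (g : ℕ)
    (hg : IsGreatest {m | ∃ B ⊆ A,
        (¬ ∃ k, 2 ≤ k ∧ ∃ v : ZMod k → V, Function.Injective v ∧
          ∀ i : ZMod k, (v i, v (i + 1)) ∈ B) ∧ B.card = m} g)
    (hA : A.card = 2 * g) (ord : V → ℕ) (hord : Function.Injective ord) :
    (A.filter (fun p => ord p.1 < ord p.2)).card = g := by
  set B := A.filter (fun p => ord p.1 < ord p.2) with hBdef
  set B' := A.filter (fun p => ¬ ord p.1 < ord p.2) with hB'def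
  have hsum : B.card + B'.card = A.card := Finset.card_filter_add_card_filter_not _
  have hBle : B.card ≤ g := hg.2 ⟨B, Finset.filter_subset _ _,
    acyc_of_mono ord B (fun p hp => (Finset.mem_filter.1 hp).2), rfl⟩
  have hB'le : B'.card ≤ g := by
    refine hg.2 ⟨B', Finset.filter_subset _ _, acyc_of_anti ord B' ?_, rfl⟩
    rintro ⟨a, b⟩ hp
    obtain ⟨hpA, hplt⟩ := Finset.mem_filter.1 hp
    have hab : a ≠ b := fun h => hloop a (h ▸ hpA)
    have : ord a ≠ ord b := fun h => hab (hord h)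
    simp only at hplt ⊢
    omega
  omega

/-- For a finite loopless directed graph `H`, `γ(H) = |E(H)|/2` iff every pair
of distinct vertices either induces a directed 2-cycle or no arcs at all.
`γ(H)` is the maximum number of arcs in an acyclic subgraph (2-cycles count as cycles). -/
theorem stmt_2 {V : Type} [Fintype V] [DecidableEq V] (A : Finset (V × V))
    (hloop : ∀ v : V, (v, v) ∉ A) (g : ℕ)
    (hg : IsGreatest {m | ∃ B ⊆ A,
        (¬ ∃ k, 2 ≤ k ∧ ∃ v : ZMod k → V, Function.Injective v ∧
          ∀ i : ZMod k, (v i, v (i + 1)) ∈ B) ∧ B.card = m} g) :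
    2 * g = A.card ↔ ∀ u v : V, u ≠ v →
      ((u, v) ∈ A ∧ (v, u) ∈ A) ∨ ((u, v) ∉ A ∧ (v, u) ∉ A) := by
  classical
  obtain ⟨e, he⟩ : ∃ e : V → ℕ, Function.Injective e :=
    ⟨fun w => ((Fintype.equivFin V) w : ℕ), fun a b h =>
      (Fintype.equivFin V).injective (Fin.val_injective h)⟩
  constructor
  · -- 2g = |A| → symmetric
    intro h2g u v huv
    have hvu : v ≠ u := Ne.symm huv
    have hA : A.card = 2 * g := h2g.symm
    set ord₁ : V → ℕ := fun w => if w = u then 0 else if w = v then 1 else e w + 2 with h1def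
    set ord₂ : V → ℕ := fun w => if w = v then 0 else if w = u then 1 else e w + 2 with h2def
    have hord₁ : Function.Injective ord₁ := by
      intro a b h
      simp only [h1def] at h
      split_ifs at h <;> subst_vars <;> first | rfl | omega | exact he (by omega)
    have hord₂ : Function.Injective ord₂ := by
      intro a b h
      simp only [h2def] at h
      split_ifs at h <;> subst_vars <;> first | rfl | omega | exact he (by omega)
    set B₁ := A.filter (fun p => ord₁ p.1 < ord₁ p.2) with hB₁def
    set B₂ := A.filter (fun p => ord₂ p.1 < ord₂ p.2) with hB₂def
    have hcard₁ : B₁.card = g := card_inc A hloop g hg hA ord₁ hord₁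
    have hcard₂ : B₂.card = g := card_inc A hloop g hg hA ord₂ hord₂
    have key : ∀ p : V × V, p ∈ A → p ≠ (u, v) → p ≠ (v, u) →
        ((ord₁ p.1 < ord₁ p.2) ↔ (ord₂ p.1 < ord₂ p.2)) := by
      rintro ⟨a, b⟩ hpA hp1 hp2
      have hab : a ≠ b := fun h => hloop a (h ▸ hpA)
      simp only [h1def, h2def]
      split_ifs <;>
        first
          | omega
          | exact absurd ((‹a = u›).symm.trans ‹a = v›) huv
          | exact absurd ((‹b = u›).symm.trans ‹b = v›) huv
          | exact absurd ((‹a = u›).trans (‹b = u›).symm) hab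
          | exact absurd ((‹a = v›).trans (‹b = v›).symm) hab
          | exact absurd (by rw [‹a = u›, ‹b = v›]) hp1
          | exact absurd (by rw [‹a = v›, ‹b = u›]) hp2
    have hvuB₁ : (v, u) ∉ B₁ := by
      simp only [hB₁def, Finset.mem_filter, h1def]
      rintro ⟨-, h⟩
      simp only [hvu, huv, if_true, if_false, if_neg, if_pos] at h
      omega
    have huvB₂ : (u, v) ∉ B₂ := by
      simp only [hB₂def, Finset.mem_filter, h2def]
      rintro ⟨-, h⟩
      simp only [hvu, huv, if_true, if_false, if_neg, if_pos] at h
      omega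
    have hE : B₁.erase (u, v) = B₂.erase (v, u) := by
      ext p
      simp only [Finset.mem_erase, hB₁def, hB₂def, Finset.mem_filter]
      constructor
      · rintro ⟨hp1, hpA, hlt⟩
        have hp2 : p ≠ (v, u) := by
          rintro rfl
          exact hvuB₁ (Finset.mem_filter.2 ⟨hpA, hlt⟩)
        exact ⟨hp2, hpA, (key p hpA hp1 hp2).1 hlt⟩
      · rintro ⟨hp2, hpA, hlt⟩
        have hp1 : p ≠ (u, v) := by
          rintro rfl
          exact huvB₂ (Finset.mem_filter.2 ⟨hpA, hlt⟩)
        exact ⟨hp1, hpA, (key p hpA hp1 hp2).2 hlt⟩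
    by_cases huvA : (u, v) ∈ A
    · left
      refine ⟨huvA, ?_⟩
      by_contra hvuA
      have huvB₁ : (u, v) ∈ B₁ := by
        simp only [hB₁def, Finset.mem_filter, h1def]
        refine ⟨huvA, ?_⟩
        simp [huv, hvu]
      have h1 : (B₁.erase (u, v)).card + 1 = B₁.card := Finset.card_erase_add_one huvB₁
      have h2 : (B₂.erase (v, u)) = B₂ := Finset.erase_eq_of_notMem
        (fun h => hvuA (Finset.mem_filter.1 h).1)
      rw [hE, h2] at h1
      omega
    · right
      refine ⟨huvA, ?_⟩
      by_contra hvuA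
      have hvuB₂ : (v, u) ∈ B₂ := by
        simp only [hB₂def, Finset.mem_filter, h2def]
        refine ⟨hvuA, ?_⟩
        simp [huv, hvu]
      have h1 : (B₂.erase (v, u)).card + 1 = B₂.card := Finset.card_erase_add_one hvuB₂
      have h2 : (B₁.erase (u, v)) = B₁ := Finset.erase_eq_of_notMem
        (fun h => huvA (Finset.mem_filter.1 h).1)
      rw [← hE, h2] at h1
      omega
  · -- symmetric → 2g = |A|
    intro hsym
    have hswap : ∀ p : V × V, p ∈ A → p.swap ∈ A := by
      rintro ⟨a, b⟩ hp
      have hab : a ≠ b := fun h => hloop a (h ▸ hp)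
      rcases hsym a b hab with ⟨-, h⟩ | ⟨h, -⟩
      · exact h
      · exact absurd hp h
    obtain ⟨B, hBA, hBac, hBcard⟩ := hg.1
    have hdisj : Disjoint B (B.image Prod.swap) := by
      rw [Finset.disjoint_left]
      intro p hp hp'
      obtain ⟨⟨x, y⟩, hq, rfl⟩ := Finset.mem_image.1 hp'
      have hxy : x ≠ y := by
        intro h
        subst h
        exact hloop x (hBA hq)
      exact no_two_cycle B hBac hxy hq hp
    have hupper : 2 * B.card ≤ A.card := by
      have hsub : B ∪ B.image Prod.swap ⊆ A := by
        intro p hp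
        rcases Finset.mem_union.1 hp with h | h
        · exact hBA h
        · obtain ⟨q, hq, hqp⟩ := Finset.mem_image.1 h
          exact hqp ▸ hswap q (hBA hq)
      have := Finset.card_le_card hsub
      rwa [Finset.card_union_of_disjoint hdisj,
        Finset.card_image_of_injective _ Prod.swap_injective, ← two_mul] at this
    set B₀ := A.filter (fun p => e p.1 < e p.2) with hB₀def
    have hsplit : A.filter (fun p => ¬ e p.1 < e p.2) = B₀.image Prod.swap := by
      ext ⟨a, b⟩
      simp only [Finset.mem_filter, Finset.mem_image, hB₀def, Prod.exists, Prod.swap_prod_mk,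
        Prod.mk.injEq]
      constructor
      · rintro ⟨hpA, hnlt⟩
        have hab : a ≠ b := fun h => hloop a (h ▸ hpA)
        have : e a ≠ e b := fun h => hab (he h)
        exact ⟨b, a, ⟨hswap (a, b) hpA, by omega⟩, rfl, rfl⟩
      · rintro ⟨x, y, ⟨hxyA, hlt⟩, rfl, rfl⟩
        exact ⟨hswap (x, y) hxyA, by omega⟩
    have hA2 : A.card = 2 * B₀.card := by
      have := Finset.card_filter_add_card_filter_not
        (s := A) (p := fun p => e p.1 < e p.2)
      rw [hsplit, Finset.card_image_of_injective _ Prod.swap_injective, ← hB₀def] at this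
      omega
    have hB₀le : B₀.card ≤ g := hg.2 ⟨B₀, Finset.filter_subset _ _,
      acyc_of_mono e B₀ (fun p hp => (Finset.mem_filter.1 hp).2), rfl⟩
    omega
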